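/- Let {𝒮_j}_{j=1}^q be an orthogonal (Σ_t)_{t∈T}-decorrelating partition, let 𝒮^inv be the direct sum of those 𝒮_j that are opt-invariant on T, and let β^inv be the unique maximizer over 𝒮^inv of β ↦ (1/n)∑_{t∈T} ΔVar_t(β). Then β^inv is time-invariant over T: for every t ∈ T, (γ_t − β^inv)ᵀ Σ_t β^inv = 0 (equivalently, Cov(Y_t − X_tᵀβ^inv, X_tᵀβ^inv) = 0). -/

import Mathlib

open Matrix Finset MeasureTheory

noncomputable section

/-- Vectors in `ℝ^p`. -/
abbrev Vec (p : ℕ) : Type := Fin p → ℝ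

/-- Real `p × p` matrices. -/
abbrev Mat (p : ℕ) : Type := Matrix (Fin p) (Fin p) ℝ

/-- Explained variance `ΔVar(β) = 2 γᵀ C β − βᵀ C β` at a time with covariance `C`
and true parameter `γ`. -/
def dVar {p : ℕ} (C : Mat p) (γ β : Vec p) : ℝ :=
  2 * (γ ⬝ᵥ (C *ᵥ β)) - β ⬝ᵥ (C *ᵥ β)

/-- `β₀` is the unique maximizer of `f` over the linear subspace whose orthogonal
projection matrix is `P` (membership in the subspace is expressed as `P *ᵥ β = β`). -/
def IsUMaxOn {p : ℕ} (f : Vec p → ℝ) (P : Mat p) (β₀ : Vec p) : Prop :=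
  P *ᵥ β₀ = β₀ ∧ ∀ β : Vec p, P *ᵥ β = β → β ≠ β₀ → f β < f β₀

/-- The matrices `P j` are the orthogonal projection matrices of a family of pairwise
orthogonal nonzero linear subspaces of `ℝ^p` whose direct sum is `ℝ^p`. -/
structure OrthPartition (p q : ℕ) (P : Fin q → Mat p) : Prop where
  symm : ∀ j, (P j)ᵀ = P j
  idem : ∀ j, P j * P j = P j
  nonzero : ∀ j, P j ≠ 0
  orth : ∀ i j, i ≠ j → P i * P j = 0
  sum_one : ∑ j, P j = 1

/-- The subspace with orthogonal projection `Q` is opt-invariant on `{1,…,n}`: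
the unique maximizer of `ΔVar_t` over it is the same for all `t`. -/
def OptInv {p n : ℕ} (Cov : Fin n → Mat p) (γ : Fin n → Vec p) (Q : Mat p) : Prop :=
  ∃ β₀ : Vec p, ∀ t : Fin n, IsUMaxOn (dVar (Cov t) (γ t)) Q β₀

open scoped Classical in
/-- Orthogonal projection onto `𝒮^inv`, the direct sum of the opt-invariant subspaces
of the partition. -/
noncomputable def invProj {p n q : ℕ} (Cov : Fin n → Mat p) (γ : Fin n → Vec p)
    (P : Fin q → Mat p) : Mat p :=
  ∑ j ∈ Finset.univ.filter (fun j => OptInv Cov γ (P j)), P j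

open scoped Classical in
/-- Orthogonal projection onto `𝒮^res`, the direct sum of the non-opt-invariant
subspaces of the partition. -/
noncomputable def resProj {p n q : ℕ} (Cov : Fin n → Mat p) (γ : Fin n → Vec p)
    (P : Fin q → Mat p) : Mat p :=
  ∑ j ∈ Finset.univ.filter (fun j => ¬ OptInv Cov γ (P j)), P j

/-- A vector `β` is time-invariant over `{1,…,n}`: `(γ_t − β)ᵀ Σ_t β = 0` for all `t`
(equivalently `Cov(Y_t − X_tᵀβ, X_tᵀβ) = 0`). -/
def TimeInv {p n : ℕ} (Cov : Fin n → Mat p) (γ : Fin n → Vec p) (β : Vec p) : Prop :=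
  ∀ t : Fin n, (γ t - β) ⬝ᵥ ((Cov t) *ᵥ β) = 0

/-! ### Auxiliary lemmas -/

lemma mulVec_sum' {p : ℕ} {ι : Type*} (A : Mat p) (s : Finset ι) (f : ι → Vec p) :
    A *ᵥ (∑ j ∈ s, f j) = ∑ j ∈ s, A *ᵥ (f j) := by
  ext i
  simp [Matrix.mulVec, dotProduct, Finset.mul_sum]
  rw [Finset.sum_comm]

lemma sum_mulVec' {p : ℕ} {ι : Type*} (s : Finset ι) (A : ι → Mat p) (x : Vec p) :
    (∑ j ∈ s, A j) *ᵥ x = ∑ j ∈ s, (A j) *ᵥ x := by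
  ext i
  simp [Matrix.mulVec, dotProduct, Matrix.sum_apply, Finset.sum_mul]
  rw [Finset.sum_comm]

lemma dotProduct_sum' {p : ℕ} {ι : Type*} (x : Vec p) (s : Finset ι) (f : ι → Vec p) :
    x ⬝ᵥ (∑ j ∈ s, f j) = ∑ j ∈ s, x ⬝ᵥ f j := by
  simp [dotProduct, Finset.mul_sum]
  rw [Finset.sum_comm]

lemma sum_dotProduct' {p : ℕ} {ι : Type*} (s : Finset ι) (f : ι → Vec p) (x : Vec p) :
    (∑ j ∈ s, f j) ⬝ᵥ x = ∑ j ∈ s, f j ⬝ᵥ x := by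
  rw [dotProduct_comm, dotProduct_sum']
  exact Finset.sum_congr rfl fun j _ => dotProduct_comm _ _

lemma transpose_dot {p : ℕ} (A : Mat p) (x z : Vec p) :
    (A *ᵥ x) ⬝ᵥ z = x ⬝ᵥ (Aᵀ *ᵥ z) := by
  rw [dotProduct_mulVec, vecMul_transpose]

lemma posdef_symm {p : ℕ} {C : Mat p} (hC : C.PosDef) : Cᵀ = C := by
  have h := hC.1
  ext i j
  have := congrFun (congrFun h i) j
  simpa [Matrix.conjTranspose_apply] using this

lemma sym_dot {p : ℕ} {C : Mat p} (hC : Cᵀ = C) (x y : Vec p) :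
    x ⬝ᵥ (C *ᵥ y) = y ⬝ᵥ (C *ᵥ x) := by
  calc x ⬝ᵥ (C *ᵥ y) = (x ᵥ* C) ⬝ᵥ y := dotProduct_mulVec x C y
    _ = (x ᵥ* Cᵀ) ⬝ᵥ y := by rw [hC]
    _ = (C *ᵥ x) ⬝ᵥ y := by rw [vecMul_transpose]
    _ = y ⬝ᵥ (C *ᵥ x) := dotProduct_comm _ _

/-- First-order condition: the maximizer of `dVar` over a subspace makes the residual
`γ − β₀` `C`-orthogonal to every vector of the subspace. -/
lemma foc {p : ℕ} {C : Mat p} (hC : C.PosDef) {γ β₀ : Vec p} {Pi : Mat p}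
    (hmax : IsUMaxOn (dVar C γ) Pi β₀) {v : Vec p} (hv : Pi *ᵥ v = v) :
    (γ - β₀) ⬝ᵥ (C *ᵥ v) = 0 := by
  have hCs : Cᵀ = C := posdef_symm hC
  set a := (γ - β₀) ⬝ᵥ (C *ᵥ v) with ha
  set b := v ⬝ᵥ (C *ᵥ v) with hb
  have weak : ∀ β, Pi *ᵥ β = β → dVar C γ β ≤ dVar C γ β₀ := by
    intro β hm
    by_cases h : β = β₀
    · simp [h]
    · exact (hmax.2 β hm h).le
  have key : ∀ s : ℝ, 2 * s * a - s ^ 2 * b ≤ 0 := by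
    intro s
    have hm : Pi *ᵥ (β₀ + s • v) = β₀ + s • v := by
      rw [Matrix.mulVec_add, Matrix.mulVec_smul, hmax.1, hv]
    have h := weak _ hm
    have hsym : v ⬝ᵥ (C *ᵥ β₀) = β₀ ⬝ᵥ (C *ᵥ v) := sym_dot hCs v β₀
    simp only [dVar, Matrix.mulVec_add, Matrix.mulVec_smul, dotProduct_add,
      add_dotProduct, dotProduct_smul, smul_dotProduct, smul_eq_mul] at h
    rw [hsym] at h
    simp only [ha, hb, sub_dotProduct]
    nlinarith [h]
  by_cases hv0 : v = 0
  · simp [ha, hv0]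
  · have hbpos : 0 < b := by
      have := hC.dotProduct_mulVec_pos hv0
      simpa [hb] using this
    have h := key (a / b)
    have h2 : 2 * (a / b) * a - (a / b) ^ 2 * b = a ^ 2 / b := by
      field_simp
      ring
    rw [h2] at h
    have : a ^ 2 ≤ 0 := by
      by_contra hlt
      push_neg at hlt
      exact absurd h (not_le.2 (div_pos hlt hbpos))
    nlinarith [sq_nonneg a]

/-- Proposition 2 (ii) of the paper: the unique maximizer `β^inv` of
the averaged explained variance over `𝒮^inv` is time-invariant over `{1,…,n}`. -/
theorem stmt6 {p n q : ℕ} (hp : 1 ≤ p) (hn : 1 ≤ n)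
    (Cov : Fin n → Mat p) (hCov : ∀ t, (Cov t).PosDef)
    (γ : Fin n → Vec p)
    (P : Fin q → Mat p) (hP : OrthPartition p q P)
    (hdec : ∀ (t : Fin n) (i j : Fin q), i ≠ j → P i * Cov t * P j = 0)
    (βinv : Vec p)
    (hβ : IsUMaxOn (fun β => (n : ℝ)⁻¹ * ∑ t, dVar (Cov t) (γ t) β)
      (invProj Cov γ P) βinv) :
    TimeInv Cov γ βinv := by
  classical
  set F : Finset (Fin q) := Finset.univ.filter (fun j => OptInv Cov γ (P j)) with hFdef
  have hQ : invProj Cov γ P = ∑ j ∈ F, P j := rfl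
  have t₀ : Fin n := ⟨0, hn⟩
  -- per-subspace common maximizers
  set b : Fin q → Vec p :=
    fun j => if h : OptInv Cov γ (P j) then h.choose else 0 with hbdef
  have hb : ∀ j ∈ F, ∀ t : Fin n, IsUMaxOn (dVar (Cov t) (γ t)) (P j) (b j) := by
    intro j hj t
    have hj' : OptInv Cov γ (P j) := (Finset.mem_filter.1 hj).2
    simp only [hbdef, dif_pos hj']
    exact hj'.choose_spec t
  have hPb : ∀ j ∈ F, P j *ᵥ b j = b j := fun j hj => (hb j hj t₀).1
  -- cross terms vanish
  have hcross : ∀ (t : Fin n) (j k : Fin q), j ≠ k → ∀ x y : Vec p,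
      (P j *ᵥ x) ⬝ᵥ ((Cov t) *ᵥ (P k *ᵥ y)) = 0 := by
    intro t j k hjk x y
    rw [Matrix.mulVec_mulVec, transpose_dot, hP.symm j, Matrix.mulVec_mulVec]
    rw [← Matrix.mul_assoc, hdec t j k hjk]
    simp
  -- the candidate maximizer
  set βstar : Vec p := ∑ j ∈ F, b j with hβstar
  have hPkb0 : ∀ (k : Fin q), ∀ j ∈ F, j ≠ k → P k *ᵥ b j = 0 := by
    intro k j hj hjk
    rw [← hPb j hj, Matrix.mulVec_mulVec, hP.orth k j (Ne.symm hjk)]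
    simp
  have hcomp : ∀ k ∈ F, P k *ᵥ βstar = b k := by
    intro k hk
    rw [hβstar, mulVec_sum']
    rw [Finset.sum_eq_single_of_mem k hk]
    · rw [← hPb k hk, Matrix.mulVec_mulVec, hP.idem k, hPb k hk]
    · intro j hj hjk
      exact hPkb0 k j hj hjk
  have hQβstar : invProj Cov γ P *ᵥ βstar = βstar := by
    rw [hQ, sum_mulVec']
    rw [hβstar]
    exact Finset.sum_congr rfl fun k hk => hcomp k hk
  -- decoupling of dVar along the partition
  have hsplit : ∀ (t : Fin n) (c : Fin q → Vec p), (∀ j ∈ F, P j *ᵥ c j = c j) →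
      dVar (Cov t) (γ t) (∑ j ∈ F, c j) = ∑ j ∈ F, dVar (Cov t) (γ t) (c j) := by
    intro t c hc
    have h1 : γ t ⬝ᵥ ((Cov t) *ᵥ ∑ j ∈ F, c j) = ∑ j ∈ F, γ t ⬝ᵥ ((Cov t) *ᵥ c j) := by
      rw [mulVec_sum', dotProduct_sum']
    have h2 : (∑ j ∈ F, c j) ⬝ᵥ ((Cov t) *ᵥ ∑ j ∈ F, c j)
        = ∑ j ∈ F, c j ⬝ᵥ ((Cov t) *ᵥ c j) := by
      rw [mulVec_sum', sum_dotProduct']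
      refine Finset.sum_congr rfl fun j hj => ?_
      rw [dotProduct_sum']
      rw [Finset.sum_eq_single_of_mem j hj]
      intro k hk hkj
      rw [← hc j hj, ← hc k hk]
      exact hcross t j k (Ne.symm hkj) _ _
    simp only [dVar, h1, h2, Finset.mul_sum, Finset.sum_sub_distrib]
  have hstar_split : ∀ t : Fin n,
      dVar (Cov t) (γ t) βstar = ∑ j ∈ F, dVar (Cov t) (γ t) (b j) :=
    fun t => hsplit t b hPb
  -- βstar is the unique maximizer of the averaged dVar over 𝒮^inv
  have hnpos : (0 : ℝ) < (n : ℝ)⁻¹ := by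
    have : (0 : ℝ) < (n : ℝ) := by exact_mod_cast hn
    positivity
  haveI : Nonempty (Fin n) := ⟨t₀⟩
  have hmaxstar : IsUMaxOn (fun β => (n : ℝ)⁻¹ * ∑ t, dVar (Cov t) (γ t) β)
      (invProj Cov γ P) βstar := by
    refine ⟨hQβstar, fun β hm hne => ?_⟩
    have hβdec : β = ∑ j ∈ F, (P j *ᵥ β) := by
      conv_lhs => rw [← hm, hQ, sum_mulVec']
    have hPjβ : ∀ j ∈ F, P j *ᵥ (P j *ᵥ β) = P j *ᵥ β := by
      intro j _
      rw [Matrix.mulVec_mulVec, hP.idem j]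
    have hex : ∃ j ∈ F, P j *ᵥ β ≠ b j := by
      by_contra hcon
      push_neg at hcon
      exact hne (by rw [hβdec, hβstar]; exact Finset.sum_congr rfl hcon)
    obtain ⟨j₀, hj₀F, hj₀ne⟩ := hex
    have hstrict : ∀ t : Fin n, dVar (Cov t) (γ t) β < dVar (Cov t) (γ t) βstar := by
      intro t
      calc dVar (Cov t) (γ t) β = ∑ j ∈ F, dVar (Cov t) (γ t) (P j *ᵥ β) := by
            conv_lhs => rw [hβdec]
            exact hsplit t (fun j => P j *ᵥ β) hPjβ
        _ < ∑ j ∈ F, dVar (Cov t) (γ t) (b j) := by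
            refine Finset.sum_lt_sum (fun j hj => ?_) ⟨j₀, hj₀F, ?_⟩
            · by_cases h : P j *ᵥ β = b j
              · rw [h]
              · exact ((hb j hj t).2 _ (hPjβ j hj) h).le
            · exact (hb j₀ hj₀F t).2 _ (hPjβ j₀ hj₀F) hj₀ne
        _ = dVar (Cov t) (γ t) βstar := (hstar_split t).symm
    have hsum : ∑ t, dVar (Cov t) (γ t) β < ∑ t, dVar (Cov t) (γ t) βstar :=
      Finset.sum_lt_sum_of_nonempty Finset.univ_nonempty fun t _ => hstrict t
    exact mul_lt_mul_of_pos_left hsum hnpos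
  -- uniqueness ⇒ βinv = βstar
  have heq : βinv = βstar := by
    by_contra hne
    have h1 := hβ.2 βstar hQβstar (fun h => hne h.symm)
    have h2 := hmaxstar.2 βinv hβ.1 hne
    exact absurd h1 (not_lt.2 h2.le)
  -- conclude time-invariance
  intro t
  rw [heq, hβstar, mulVec_sum', dotProduct_sum']
  refine Finset.sum_eq_zero fun j hj => ?_
  have h1 : (γ t - b j) ⬝ᵥ ((Cov t) *ᵥ b j) = 0 := foc (hCov t) (hb j hj t) (hPb j hj)
  have h2 : (∑ k ∈ F, b k) ⬝ᵥ ((Cov t) *ᵥ b j) = b j ⬝ᵥ ((Cov t) *ᵥ b j) := by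
    rw [sum_dotProduct']
    rw [Finset.sum_eq_single_of_mem j hj]
    intro k hk hkj
    rw [← hPb k hk, ← hPb j hj]
    exact hcross t k j hkj _ _
  rw [sub_dotProduct] at h1 ⊢
  rw [← hβstar] at h2 ⊢
  rw [hβstar] at h2
  rw [hβstar, h2]
  linarith [h1]
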